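/- arXiv:1501.05019 — 2 statements merged into one kernel-verified Lean document; each statement's English description precedes it below -/
import Mathlib

section
/- For α = 1/2 and ρ = 1, the limiting robustness equations 4λ₀² + 4λ₁² + 8λ₀λ₁a - 1 = 0, 4 - 8λ₀ - 8λ₁a - ε₀ = 0, 4 - 8λ₁ - 8λ₀a - ε₁ = 0 in unknowns λ₀, λ₁ imply the consistency equation 2ε₁(a(ε₀-4)+4) - (4a+ε₀-4)² - ε₁² = 0 relating a, ε₀, ε₁. -/
/-- Elimination of the multipliers lam₀, lam₁ from the limiting robustness
equations (α = 1/2, ρ = 1) yields the consistency equation in a, ε₀, ε₁. -/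
theorem limiting_robustness_consistency
    (a ε₀ ε₁ lam₀ lam₁ : ℝ) (ha : a ^ 2 ≠ 1)
    (h1 : 4 * lam₀ ^ 2 + 4 * lam₁ ^ 2 + 8 * lam₀ * lam₁ * a - 1 = 0)
    (h2 : 4 - 8 * lam₀ - 8 * lam₁ * a - ε₀ = 0)
    (h3 : 4 - 8 * lam₁ - 8 * lam₀ * a - ε₁ = 0) :
    2 * ε₁ * (a * (ε₀ - 4) + 4) - (4 * a + ε₀ - 4) ^ 2 - ε₁ ^ 2 = 0 := by
  linear_combination (-16 * (1 - a ^ 2)) * h1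
    + (-((4 - ε₀) + (8 * lam₀ + 8 * lam₁ * a) - 2 * a * (8 * lam₁ + 8 * lam₀ * a))
        + 2 * a * (4 - 8 * lam₁ - 8 * lam₀ * a - ε₁)) * h2
    + (-((4 - ε₁) + (8 * lam₁ + 8 * lam₀ * a) - 2 * a * (8 * lam₀ + 8 * lam₁ * a))) * h3
end

section
/- In the symmetric case ε := ε₀ = ε₁, the maximum robustness parameter is ε_max = 4 - 2√(2(1+a)): substituting ε₀ = ε₁ = 4 - 2√(2(1+a)) into a = (1/16)(16 - 4ε₁ + ε₀(ε₁-4) - √((ε₀-8)ε₀(ε₁-8)ε₁)) returns a, for all a ∈ [0,1]. -/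
/-- In the symmetric case ε₀ = ε₁ = 4 - 2√(2(1+a)), the root formula for a
returns a, for all a ∈ [0,1]. -/
theorem symmetric_max_robustness
    (a : ℝ) (ha : a ∈ Set.Icc (0:ℝ) 1) :
    let ε := 4 - 2 * Real.sqrt (2 * (1 + a))
    (1 / 16) * (16 - 4 * ε + ε * (ε - 4)
      - Real.sqrt ((ε - 8) * ε * (ε - 8) * ε)) = a := by
  obtain ⟨ha0, ha1⟩ := ha
  intro ε
  set s := Real.sqrt (2 * (1 + a)) with hs
  have hs0 : 0 ≤ s := Real.sqrt_nonneg _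
  have hs2 : s ^ 2 = 2 * (1 + a) := Real.sq_sqrt (by linarith)
  have hsle : s ≤ 2 := by nlinarith
  have hε0 : 0 ≤ ε := by simp only [ε]; linarith
  have hkey : (ε - 8) * ε * (ε - 8) * ε = ((8 - ε) * ε) ^ 2 := by ring
  rw [hkey, Real.sqrt_sq (mul_nonneg (by simp only [ε]; linarith) hε0)]
  show (1 / 16) * (16 - 4 * (4 - 2 * s) + (4 - 2 * s) * ((4 - 2 * s) - 4)
      - (8 - (4 - 2 * s)) * (4 - 2 * s)) = a
  nlinarith [hs2]
end
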